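/- Let r ≥ 1 and let ρ_0, ρ_1, ..., ρ_{r-1} be density matrices. Suppose dist(ρ_{j-1}, ρ_j) ≤ 3√(α_j) for j = 1, ..., r-1 and there is a POVM element 0 ≤ M ≤ I with Tr(M ρ_0) ≥ 2/3 and α_r := Tr(M ρ_{r-1}). Then α_r ≥ 2/3 - 3∑_{j=1}^{r-1}√(α_j), and consequently ∑_{j=1}^r α_j ≥ 1/(21r). -/

import Mathlib

open Finset
open scoped ComplexOrder

noncomputable section

/-- The swap matrix on `H ⊗ H`. -/
def swapMatrix (ι : Type*) [Fintype ι] [DecidableEq ι] : Matrix (ι × ι) (ι × ι) ℂ :=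
  Matrix.of fun p q => if p.1 = q.2 ∧ p.2 = q.1 then 1 else 0

/-- Partial trace over the first tensor factor. -/
def ptraceFst {ι κ : Type*} [Fintype ι] (M : Matrix (ι × κ) (ι × κ) ℂ) : Matrix κ κ ℂ :=
  Matrix.of fun j j' => ∑ i, M (i, j) (i, j')

/-- Partial trace over the second tensor factor. -/
def ptraceSnd {ι κ : Type*} [Fintype κ] (M : Matrix (ι × κ) (ι × κ) ℂ) : Matrix ι ι ℂ :=
  Matrix.of fun i i' => ∑ j, M (i, j) (i', j)

/-- The outer product `|ψ⟩⟨φ|`. -/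
def outer {n : Type*} (ψ φ : n → ℂ) : Matrix n n ℂ :=
  Matrix.of fun p q => ψ p * star (φ q)

/-- The trace norm `‖A‖_tr = Tr √(AᴴA)`. -/
def traceNorm {n : Type*} [Fintype n] [DecidableEq n] (A : Matrix n n ℂ) : ℝ :=
  ((((Matrix.posSemidef_conjTranspose_mul_self A).1.eigenvectorUnitary : Matrix n n ℂ) *
      Matrix.diagonal (((↑) : ℝ → ℂ) ∘ (√·) ∘ (Matrix.posSemidef_conjTranspose_mul_self A).1.eigenvalues) *
      (star (Matrix.posSemidef_conjTranspose_mul_self A).1.eigenvectorUnitary : Matrix n n ℂ)).trace).re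

/-- The trace distance between two states. -/
def traceDist {n : Type*} [Fintype n] [DecidableEq n] (ρ σ : Matrix n n ℂ) : ℝ :=
  (1 / 2) * traceNorm (ρ - σ)


section AuxHybrid
open Matrix
open scoped MatrixOrder
variable {n : Type*} [Fintype n] [DecidableEq n]

lemma diag_re_nonneg {P : Matrix n n ℂ} (hP : P.PosSemidef) (i : n) : 0 ≤ (P i i).re := by
  have h := hP.dotProduct_mulVec_nonneg (Pi.single i 1)
  have : dotProduct (star (Pi.single i 1)) (P *ᵥ Pi.single i 1) = P i i := by
    simp [dotProduct, Matrix.mulVec, Pi.single_apply, Finset.mul_sum]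
  rw [this] at h
  exact (Complex.le_def.mp h).1

lemma trace_psd_re_nonneg {P : Matrix n n ℂ} (hP : P.PosSemidef) : 0 ≤ P.trace.re := by
  simp only [Matrix.trace, Matrix.diag]
  rw [Complex.re_sum]
  exact Finset.sum_nonneg fun i _ => diag_re_nonneg hP i

lemma trace_mul_psd_re_nonneg {P Q : Matrix n n ℂ} (hP : P.PosSemidef) (hQ : Q.PosSemidef) :
    0 ≤ ((P * Q).trace).re := by
  have h1 : P * Q = CFC.sqrt P * (CFC.sqrt P * Q) := by
    rw [← mul_assoc, CFC.sqrt_mul_sqrt_self P hP.nonneg]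
  have h2 : (P * Q).trace = (CFC.sqrt P * Q * CFC.sqrt P).trace := by
    rw [h1, Matrix.trace_mul_comm, mul_assoc]
  rw [h2]
  have hpsd : (CFC.sqrt P * Q * (CFC.sqrt P)ᴴ).PosSemidef := hQ.mul_mul_conjTranspose_same _
  rw [(CFC.sqrt_nonneg P).posSemidef.1.eq] at hpsd
  exact trace_psd_re_nonneg hpsd

lemma trace_unitary_conj (U : Matrix.unitaryGroup n ℂ) (D : Matrix n n ℂ) :
    ((U : Matrix n n ℂ) * D * star (U : Matrix n n ℂ)).trace = D.trace := by
  rw [Matrix.trace_mul_cycle]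
  rw [show star (U : Matrix n n ℂ) * (U : Matrix n n ℂ) = 1 from
    Matrix.UnitaryGroup.star_mul_self U]
  rw [one_mul]

lemma conj_mul_conj {U : Matrix n n ℂ} (hUU : star U * U = 1) (D E : Matrix n n ℂ) :
    (U * D * star U) * (U * E * star U) = U * (D * E) * star U := by
  simp only [mul_assoc]
  rw [← mul_assoc (star U) U, hUU, one_mul]

lemma traceNorm_eq_sum_abs {A : Matrix n n ℂ} (hA : A.IsHermitian) :
    traceNorm A = ∑ i, |hA.eigenvalues i| := by
  set U : Matrix n n ℂ := (hA.eigenvectorUnitary : Matrix n n ℂ) with hU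
  set S : Matrix n n ℂ :=
    U * Matrix.diagonal (RCLike.ofReal ∘ fun i => |hA.eigenvalues i|) * star U with hSdef
  have hUU : star U * U = 1 := Matrix.UnitaryGroup.star_mul_self hA.eigenvectorUnitary
  have hSpsd : S.PosSemidef := by
    have : (Matrix.diagonal (RCLike.ofReal ∘ fun i => |hA.eigenvalues i| : n → ℂ)).PosSemidef := by
      refine Matrix.posSemidef_diagonal_iff.mpr fun i => ?_
      exact RCLike.ofReal_nonneg.mpr (abs_nonneg _)
    simpa [hSdef, Matrix.star_eq_conjTranspose] using this.mul_mul_conjTranspose_same U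
  have hSsq : S ^ 2 = Aᴴ * A := by
    rw [pow_two, hSdef, hA.eq, conj_mul_conj hUU, Matrix.diagonal_mul_diagonal]
    conv_rhs => rw [hA.spectral_theorem, Unitary.conjStarAlgAut_apply]
    rw [← hU, conj_mul_conj hUU, Matrix.diagonal_mul_diagonal]
    congr 2
    funext i
    simp only [Pi.mul_apply, Function.comp_apply, ← RCLike.ofReal_mul, abs_mul_abs_self]
  have hB := Matrix.posSemidef_conjTranspose_mul_self A
  set V : Matrix n n ℂ := (hB.1.eigenvectorUnitary : Matrix n n ℂ) with hV
  have hVV : star V * V = 1 := Matrix.UnitaryGroup.star_mul_self hB.1.eigenvectorUnitary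
  have hT : V * Matrix.diagonal (((↑) : ℝ → ℂ) ∘ (√·) ∘ hB.1.eigenvalues) * star V = S := by
    have hTpsd : (V * Matrix.diagonal (((↑) : ℝ → ℂ) ∘ (√·) ∘ hB.1.eigenvalues) * star V).PosSemidef := by
      have : (Matrix.diagonal (((↑) : ℝ → ℂ) ∘ (√·) ∘ hB.1.eigenvalues)).PosSemidef := by
        refine Matrix.posSemidef_diagonal_iff.mpr fun i => ?_
        exact RCLike.ofReal_nonneg.mpr (Real.sqrt_nonneg _)
      simpa [Matrix.star_eq_conjTranspose] using this.mul_mul_conjTranspose_same V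
    have hTsq : (V * Matrix.diagonal (((↑) : ℝ → ℂ) ∘ (√·) ∘ hB.1.eigenvalues) * star V) *
        (V * Matrix.diagonal (((↑) : ℝ → ℂ) ∘ (√·) ∘ hB.1.eigenvalues) * star V) = Aᴴ * A := by
      rw [conj_mul_conj hVV, Matrix.diagonal_mul_diagonal]
      conv_rhs => rw [hB.1.spectral_theorem, Unitary.conjStarAlgAut_apply]
      rw [← hV]
      congr 2
      refine congrArg Matrix.diagonal (funext fun i => ?_)
      simp [← Complex.ofReal_mul, Real.mul_self_sqrt (hB.eigenvalues_nonneg i)]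
    have hSsq' : S * S = Aᴴ * A := by rw [← pow_two]; exact hSsq
    rw [← CFC.sqrt_unique hTsq hTpsd.nonneg, ← CFC.sqrt_unique hSsq' hSpsd.nonneg]
  have this : traceNorm A = (S.trace).re := by
    rw [← hT]
    rfl
  rw [this, hSdef, trace_unitary_conj hA.eigenvectorUnitary, Matrix.trace_diagonal]
  rw [Complex.re_sum]
  norm_num

lemma trace_mul_diagonal' (N : Matrix n n ℂ) (d : n → ℂ) :
    (N * Matrix.diagonal d).trace = ∑ i, N i i * d i := by
  simp [Matrix.trace, Matrix.diag, Matrix.mul_diagonal]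

lemma key {ρ σ M : Matrix n n ℂ} (hρ : ρ.PosSemidef) (hσ : σ.PosSemidef)
    (hρt : ρ.trace = 1) (hσt : σ.trace = 1) (hM : M.PosSemidef) (hMI : (1 - M).PosSemidef) :
    ((M * ρ).trace).re - ((M * σ).trace).re ≤ traceDist ρ σ := by
  set A := ρ - σ with hAdef
  have hA : A.IsHermitian := hρ.1.sub hσ.1
  set lam := hA.eigenvalues with hlam
  set U : Matrix n n ℂ := (hA.eigenvectorUnitary : Matrix n n ℂ) with hU
  have hUU : star U * U = 1 := Matrix.UnitaryGroup.star_mul_self hA.eigenvectorUnitary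
  set N := star U * M * U with hNdef
  have hNpsd : N.PosSemidef := by
    simpa [hNdef, Matrix.star_eq_conjTranspose] using hM.conjTranspose_mul_mul_same U
  have hNIpsd : ((1 : Matrix n n ℂ) - N).PosSemidef := by
    have h1 : star U * (1 - M) * U = 1 - N := by
      rw [mul_sub, mul_one, sub_mul, hUU, hNdef]
    rw [← h1]
    simpa [Matrix.star_eq_conjTranspose] using hMI.conjTranspose_mul_mul_same U
  have hc0 : ∀ i, 0 ≤ (N i i).re := fun i => diag_re_nonneg hNpsd i
  have hc1 : ∀ i, (N i i).re ≤ 1 := by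
    intro i
    have := diag_re_nonneg hNIpsd i
    simp only [Matrix.sub_apply, Matrix.one_apply_eq, Complex.sub_re, Complex.one_re] at this
    linarith
  -- trace of M * A
  have htr : ((M * A).trace).re = ∑ i, (N i i).re * lam i := by
    have h1 : (M * A).trace = (N * Matrix.diagonal (RCLike.ofReal ∘ lam)).trace := by
      conv_lhs => rw [hA.spectral_theorem, Unitary.conjStarAlgAut_apply]
      rw [← hU, ← hlam, ← mul_assoc, ← mul_assoc, Matrix.trace_mul_comm, hNdef]
      rw [← mul_assoc, ← mul_assoc]
    rw [h1, trace_mul_diagonal', Complex.re_sum]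
    refine Finset.sum_congr rfl fun i _ => ?_
    simp [Function.comp_apply, Complex.mul_re]
  -- sum of eigenvalues is zero
  have hsum0 : ∑ i, lam i = 0 := by
    have htrA : A.trace = 0 := by rw [hAdef, Matrix.trace_sub, hρt, hσt, sub_self]
    have h2 : A.trace = ∑ i, (RCLike.ofReal (lam i) : ℂ) := by
      conv_lhs => rw [hA.spectral_theorem, Unitary.conjStarAlgAut_apply]
      rw [← hU, ← hlam, trace_unitary_conj hA.eigenvectorUnitary, Matrix.trace_diagonal]
      rfl
    have := h2 ▸ htrA
    have h3 : ((∑ i, (RCLike.ofReal (lam i) : ℂ)).re : ℝ) = ∑ i, lam i := by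
      rw [Complex.re_sum]; norm_num
    rw [← h3, this, Complex.zero_re]
  have hdist : traceDist ρ σ = (1 / 2) * ∑ i, |lam i| := by
    rw [traceDist, traceNorm_eq_sum_abs hA]
  have hMA : ((M * ρ).trace).re - ((M * σ).trace).re = ((M * A).trace).re := by
    rw [hAdef, mul_sub, Matrix.trace_sub, Complex.sub_re]
  rw [hMA, htr, hdist]
  calc ∑ i, (N i i).re * lam i ≤ ∑ i, (|lam i| + lam i) / 2 := by
        refine Finset.sum_le_sum fun i _ => ?_
        rcases abs_cases (lam i) with ⟨h, h'⟩ | ⟨h, h'⟩ <;> nlinarith [hc0 i, hc1 i]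
    _ = (1 / 2) * (∑ i, |lam i| + ∑ i, lam i) := by
        rw [← Finset.sum_add_distrib, Finset.mul_sum]
        exact Finset.sum_congr rfl fun i _ => by ring
    _ = (1 / 2) * ∑ i, |lam i| := by rw [hsum0, add_zero]

end AuxHybrid

/-- Hybrid argument: if consecutive density matrices are `3√(α_j)`-close in trace
distance, and a POVM element `M` accepts `ρ_0` with probability at least `2/3`,
then with `α_r := Tr(M ρ_{r-1})` we get `α_r ≥ 2/3 - 3∑√(α_j)` and
`∑_{j=1}^r α_j ≥ 1/(21r)`. -/
theorem stmt_12 {n : Type*} [Fintype n] [DecidableEq n] (r : ℕ) (hr : 1 ≤ r)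
    (ρ : ℕ → Matrix n n ℂ)
    (hρ : ∀ j < r, (ρ j).PosSemidef ∧ (ρ j).trace = 1)
    (α : ℕ → ℝ) (hα : ∀ j ∈ Finset.Icc 1 (r - 1), 0 ≤ α j)
    (hclose : ∀ j ∈ Finset.Icc 1 (r - 1), traceDist (ρ (j - 1)) (ρ j) ≤ 3 * Real.sqrt (α j))
    (M : Matrix n n ℂ) (hM : M.PosSemidef) (hMI : (1 - M).PosSemidef)
    (hM0 : ((M * ρ 0).trace).re ≥ 2 / 3)
    (hαr : α r = ((M * ρ (r - 1)).trace).re) :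
    α r ≥ 2 / 3 - 3 * ∑ j ∈ Finset.Icc 1 (r - 1), Real.sqrt (α j) ∧
      ∑ j ∈ Finset.Icc 1 r, α j ≥ 1 / (21 * r) := by
  set m := r - 1 with hm
  have hm1 : m + 1 = r := Nat.succ_pred_eq_of_pos hr
  have hmr : m < r := by omega
  set f : ℕ → ℝ := fun j => ((M * ρ j).trace).re with hf
  have step : ∀ j ∈ Finset.Icc 1 m, f (j - 1) - f j ≤ 3 * Real.sqrt (α j) := by
    intro j hj
    obtain ⟨hj1, hj2⟩ := Finset.mem_Icc.mp hj
    have hj' : j < r := by omega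
    have hj'' : j - 1 < r := by omega
    exact le_trans
      (key (hρ _ hj'').1 (hρ _ hj').1 (hρ _ hj'').2 (hρ _ hj').2 hM hMI)
      (hclose j hj)
  have tele : ∀ k : ℕ, f 0 - f k = ∑ j ∈ Finset.Icc 1 k, (f (j - 1) - f j) := by
    intro k
    induction k with
    | zero => simp
    | succ l ih =>
        rw [Finset.sum_Icc_succ_top (Nat.le_add_left 1 l), ← ih]
        simp only [Nat.add_sub_cancel]
        ring
  have h1 : f 0 - f m ≤ ∑ j ∈ Finset.Icc 1 m, 3 * Real.sqrt (α j) :=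
    (tele m) ▸ Finset.sum_le_sum step
  have hfm : α r = f m := hαr
  have first : α r ≥ 2 / 3 - 3 * ∑ j ∈ Finset.Icc 1 m, Real.sqrt (α j) := by
    rw [hfm]
    have : ∑ j ∈ Finset.Icc 1 m, 3 * Real.sqrt (α j)
        = 3 * ∑ j ∈ Finset.Icc 1 m, Real.sqrt (α j) := by rw [Finset.mul_sum]
    rw [this] at h1
    have := hM0
    simp only [hf] at *
    linarith
  refine ⟨first, ?_⟩
  -- second part
  have hαr0 : 0 ≤ α r := hαr ▸ trace_mul_psd_re_nonneg hM (hρ m hmr).1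
  have hαr1 : α r ≤ 1 := by
    have e : (M * ρ m).trace = (ρ m).trace - ((1 - M) * ρ m).trace := by
      rw [sub_mul, one_mul, Matrix.trace_sub]; ring
    have h2 := trace_mul_psd_re_nonneg hMI (hρ m hmr).1
    rw [hαr, e, Complex.sub_re, (hρ m hmr).2, Complex.one_re]
    linarith
  have hsq : α r ≤ Real.sqrt (α r) := by
    have h := Real.sq_sqrt hαr0
    nlinarith [Real.sqrt_nonneg (α r)]
  have hnn : ∀ j ∈ Finset.Icc 1 r, 0 ≤ α j := by
    intro j hj
    obtain ⟨hj1, hj2⟩ := Finset.mem_Icc.mp hj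
    rcases eq_or_lt_of_le hj2 with h | h
    · exact h ▸ hαr0
    · exact hα j (Finset.mem_Icc.mpr ⟨hj1, by omega⟩)
  have hsplit : ∑ j ∈ Finset.Icc 1 r, Real.sqrt (α j)
      = ∑ j ∈ Finset.Icc 1 m, Real.sqrt (α j) + Real.sqrt (α r) := by
    rw [← hm1, Finset.sum_Icc_succ_top (Nat.le_add_left 1 m)]
  have hS : 2 / 9 ≤ ∑ j ∈ Finset.Icc 1 r, Real.sqrt (α j) := by
    have h3 : 0 ≤ Real.sqrt (α r) := Real.sqrt_nonneg _
    rw [hsplit]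
    linarith
  have hcs := sq_sum_le_card_mul_sum_sq (s := Finset.Icc 1 r) (f := fun j => Real.sqrt (α j))
  rw [Nat.card_Icc] at hcs
  have hsq2 : ∑ j ∈ Finset.Icc 1 r, Real.sqrt (α j) ^ 2 = ∑ j ∈ Finset.Icc 1 r, α j :=
    Finset.sum_congr rfl fun j hj => Real.sq_sqrt (hnn j hj)
  rw [hsq2] at hcs
  have hr' : (1 : ℝ) ≤ (r : ℝ) := by exact_mod_cast hr
  have hcard : ((r + 1 - 1 : ℕ) : ℝ) = (r : ℝ) := by norm_num
  rw [hcard] at hcs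
  have hrt : 4 / 81 ≤ (r : ℝ) * ∑ j ∈ Finset.Icc 1 r, α j := by nlinarith
  rw [ge_iff_le, div_le_iff₀ (by positivity : (0 : ℝ) < 21 * r)]
  nlinarith

end
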